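/- Let w be an area sequence and let c_0, c_1, …, c_k be its admissible insertion positions taken in admissible order. Then for every 0 ≤ i ≤ k, the inserted letter of ins_{c_i}(w), located at position c_i + 1, equals the maximum value of ins_{c_i}(w), and it is the leftmost letter of the rightmost block of consecutive maximal letters of ins_{c_i}(w); that is, i_0(ins_{c_i}(w)) = c_i + 1. -/

import Mathlib

/-- The `i`-th letter of the word `w` (`1`-indexed, as in the paper);
defaults to `0` out of range. -/
def get1 (w : List ℕ) (i : ℕ) : ℕ := w.getD (i - 1) 0

/-- `w` is the area sequence of a Dyck path: the first letter is `0` and each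
letter exceeds the previous one by at most one. -/
def IsAreaSeq (w : List ℕ) : Prop :=
  (w ≠ [] → get1 w 1 = 0) ∧ ∀ i, 1 ≤ i → i < w.length → get1 w (i + 1) ≤ get1 w i + 1

/-- Insertion at position `i` (for `0 ≤ i ≤ n`): `ins w 0` prepends a `0`, and
for `1 ≤ i ≤ n`, `ins w i` inserts the letter `w_i + 1` just after position `i`. -/
def ins (w : List ℕ) (i : ℕ) : List ℕ :=
  w.take i ++ (if i = 0 then 0 else get1 w i + 1) :: w.drop i

/-- The area statistic: the sum of the letters. -/
def area (w : List ℕ) : ℕ := w.sum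

/-- The dinv statistic: `dinv w = Σ_i d_i` where `d_i` is the number of `j > i`
with `w_j = w_i` or `w_j = w_i - 1`. -/
def dinv (w : List ℕ) : ℕ :=
  ∑ i ∈ Finset.Icc 1 w.length,
    ((Finset.Ioc i w.length).filter
      (fun j => get1 w j = get1 w i ∨ get1 w j + 1 = get1 w i)).card

/-- The maximal value of a word (`0` for the empty word). -/
def maxVal (w : List ℕ) : ℕ := w.foldr max 0

/-- Positions of the letters of maximal value `m`. -/
def Maxb (w : List ℕ) : Finset ℕ :=
  (Finset.Icc 1 w.length).filter (fun i => get1 w i = maxVal w)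

/-- Positions `i` with `w_i = m - 1` such that all letters after position `i`
are `< m`. -/
def Maxa (w : List ℕ) : Finset ℕ :=
  (Finset.Icc 1 w.length).filter (fun i =>
    get1 w i + 1 = maxVal w ∧ ∀ j ∈ Finset.Ioc i w.length, get1 w j < maxVal w)

/-- The position of the leftmost letter equal to the maximal value `m` in the
rightmost block of consecutive letters equal to `m`. -/
def i0 (w : List ℕ) : ℕ :=
  ((Finset.Icc 1 w.length).filter (fun i =>
    get1 w i = maxVal w ∧ (i = 1 ∨ get1 w (i - 1) ≠ maxVal w))).sup id

/-- The admissible insertion positions of `w`, listed in admissible order: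
the elements of `Maxb w` in decreasing order, then the elements of `Maxa w`
in decreasing order, then `i0 w - 1`.  The empty word has the single
admissible insertion position `0`. -/
def admissible (w : List ℕ) : List ℕ :=
  if w = [] then [0]
  else ((Maxb w).sort (· ≤ ·)).reverse ++ ((Maxa w).sort (· ≤ ·)).reverse ++ [i0 w - 1]

/-- Auxiliary version of the map `ψ`, reading the reversed word. -/
def psiRev : List ℕ → List ℕ
  | [] => []
  | a :: u => ins (psiRev u) ((admissible (psiRev u)).getD a 0)

/-- The map `ψ`: `ψ(ε) = ε` and `ψ(u a) = ins_{c_a}(ψ(u))` where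
`c_0, c_1, …, c_k` are the admissible insertion positions of `ψ(u)` in
admissible order. -/
def psi (w : List ℕ) : List ℕ := psiRev w.reverse

/-- The bounce sequence: `b_1 = 0`, and `b_i = b_{i-1} + 1` if
`b_{i-1} + 1 ≤ w_i`, otherwise `b_i = 0`. -/
def bseq (w : List ℕ) : ℕ → ℕ
  | 0 => 0
  | 1 => 0
  | (i + 2) => if bseq w (i + 1) + 1 ≤ get1 w (i + 2) then bseq w (i + 1) + 1 else 0

/-- The bounces of `w`: positions `1 < i ≤ n` with `b_i = 0`. -/
def bounces (w : List ℕ) : Finset ℕ :=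
  (Finset.Icc 2 w.length).filter (fun i => bseq w i = 0)

/-- The bounce statistic: the sum of the reversed positions `n - i + 1` of the
bounces of `w`. -/
def bounce (w : List ℕ) : ℕ := ∑ i ∈ bounces w, (w.length - i + 1)

section InsAux

/-! ### Auxiliary lemmas -/

lemma get1_eq' (w : List ℕ) (i : ℕ) : get1 w i = (w[i-1]?).getD 0 := by
  simp [get1, List.getD]

lemma ins_length' (w : List ℕ) (c : ℕ) (hc : c ≤ w.length) :
    (ins w c).length = w.length + 1 := by
  simp [ins]; omega

lemma get1_ins_of_le (w : List ℕ) (c j : ℕ) (hc : c ≤ w.length) (h1 : 1 ≤ j) (hj : j ≤ c) :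
    get1 (ins w c) j = get1 w j := by
  rw [get1_eq', get1_eq', ins, List.getElem?_append,
    if_pos (by simp only [List.length_take]; omega),
    List.getElem?_take, if_pos (by omega)]

lemma get1_ins_self (w : List ℕ) (c : ℕ) (hc : c ≤ w.length) :
    get1 (ins w c) (c + 1) = if c = 0 then 0 else get1 w c + 1 := by
  rw [get1_eq', ins, List.getElem?_append_right (by simp only [List.length_take]; omega)]
  have : c + 1 - 1 - (w.take c).length = 0 := by simp only [List.length_take]; omega
  rw [this]; simp

lemma get1_ins_of_gt (w : List ℕ) (c j : ℕ) (hc : c ≤ w.length) (hj : c + 2 ≤ j) :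
    get1 (ins w c) j = get1 w (j - 1) := by
  rw [get1_eq', get1_eq', ins,
    List.getElem?_append_right (by simp only [List.length_take]; omega)]
  have : j - 1 - (w.take c).length = (j - 1 - c - 1) + 1 := by
    simp only [List.length_take]; omega
  rw [this]
  simp only [List.getElem?_cons_succ, List.getElem?_drop]
  congr 2; omega

lemma le_maxVal {w : List ℕ} {a : ℕ} (h : a ∈ w) : a ≤ maxVal w := by
  induction w with
  | nil => simp at h
  | cons b l ih =>
    rcases List.mem_cons.1 h with h | h
    · simp [maxVal, h]
    · exact le_trans (ih h) (by simp [maxVal])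

lemma maxVal_le {w : List ℕ} {b : ℕ} (h : ∀ a ∈ w, a ≤ b) : maxVal w ≤ b := by
  induction w with
  | nil => simp [maxVal]
  | cons c l ih =>
    simp only [maxVal, List.foldr_cons, max_le_iff]
    exact ⟨h c (by simp), ih fun a ha => h a (by simp [ha])⟩

lemma get1_mem {w : List ℕ} {i : ℕ} (h1 : 1 ≤ i) (h2 : i ≤ w.length) : get1 w i ∈ w := by
  unfold get1
  rw [List.getD_eq_getElem _ _ (by omega)]
  exact List.getElem_mem _

lemma get1_le_maxVal (w : List ℕ) (i : ℕ) : get1 w i ≤ maxVal w := by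
  rcases Nat.lt_or_ge (i-1) w.length with h | h
  · rw [get1_eq', List.getElem?_eq_getElem h]
    exact le_maxVal (List.getElem_mem h)
  · rw [get1_eq', List.getElem?_eq_none h]
    exact Nat.zero_le _

lemma get1_eq_zero_of_gt {w : List ℕ} {i : ℕ} (h : w.length < i) : get1 w i = 0 := by
  rw [get1_eq', List.getElem?_eq_none (by omega)]; rfl

lemma maxVal_mem_or_zero (w : List ℕ) : maxVal w ∈ w ∨ maxVal w = 0 := by
  induction w with
  | nil => simp [maxVal]
  | cons b l ih =>
    simp only [maxVal, List.foldr_cons] at *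
    rcases Nat.le_total b (l.foldr max 0) with h | h
    · rw [max_eq_right h]
      rcases ih with h1 | h1
      · exact Or.inl (List.mem_cons_of_mem _ h1)
      · exact Or.inr h1
    · rw [max_eq_left h]; exact Or.inl List.mem_cons_self

lemma exists_get1_eq {w : List ℕ} {a : ℕ} (h : a ∈ w) :
    ∃ i, 1 ≤ i ∧ i ≤ w.length ∧ get1 w i = a := by
  obtain ⟨k, hk, hget⟩ := List.getElem_of_mem h
  exact ⟨k + 1, by omega, by omega, by rw [get1_eq']; simp [List.getElem?_eq_getElem hk, hget]⟩

lemma exists_get1_maxVal {w : List ℕ} (h : w ≠ []) :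
    ∃ i, 1 ≤ i ∧ i ≤ w.length ∧ get1 w i = maxVal w := by
  rcases maxVal_mem_or_zero w with h1 | h1
  · exact exists_get1_eq h1
  · obtain ⟨a, ha⟩ := List.exists_mem_of_ne_nil w h
    have : a = maxVal w := le_antisymm (le_maxVal ha) (by omega)
    exact exists_get1_eq (this ▸ ha)

lemma mem_ins {w : List ℕ} {c a : ℕ} (h : a ∈ ins w c) :
    a ∈ w ∨ a = (if c = 0 then 0 else get1 w c + 1) := by
  rcases List.mem_append.1 h with h | h
  · exact Or.inl (List.mem_of_mem_take h)
  · rcases List.mem_cons.1 h with h | h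
    · exact Or.inr h
    · exact Or.inl (List.mem_of_mem_drop h)

lemma newletter_mem_ins (w : List ℕ) (c : ℕ) :
    (if c = 0 then 0 else get1 w c + 1) ∈ ins w c :=
  List.mem_append_right _ List.mem_cons_self

/-! ### Lemmas about `i0` -/

lemma le_i0 {w : List ℕ} {p : ℕ} (h1 : 1 ≤ p) (h2 : p ≤ w.length)
    (h3 : get1 w p = maxVal w) (h4 : p = 1 ∨ get1 w (p-1) ≠ maxVal w) : p ≤ i0 w := by
  refine Finset.le_sup (f := id) ?_
  simp only [Finset.mem_filter, Finset.mem_Icc]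
  exact ⟨⟨h1, h2⟩, h3, h4⟩

lemma i0_le {w : List ℕ} {b : ℕ}
    (H : ∀ p, 1 ≤ p → p ≤ w.length → get1 w p = maxVal w →
      (p = 1 ∨ get1 w (p-1) ≠ maxVal w) → p ≤ b) : i0 w ≤ b := by
  refine Finset.sup_le fun p hp => ?_
  simp only [Finset.mem_filter, Finset.mem_Icc] at hp
  exact H p hp.1.1 hp.1.2 hp.2.1 hp.2.2

lemma i0_spec {w : List ℕ} {q : ℕ} (h1 : 1 ≤ q) (h2 : q ≤ w.length)
    (h3 : get1 w q = maxVal w) (h4 : q = 1 ∨ get1 w (q-1) ≠ maxVal w) :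
    1 ≤ i0 w ∧ i0 w ≤ w.length ∧ get1 w (i0 w) = maxVal w ∧
      (i0 w = 1 ∨ get1 w (i0 w - 1) ≠ maxVal w) := by
  classical
  set s := (Finset.Icc 1 w.length).filter (fun i =>
    get1 w i = maxVal w ∧ (i = 1 ∨ get1 w (i - 1) ≠ maxVal w)) with hs
  have hq : q ∈ s := by
    simp only [hs, Finset.mem_filter, Finset.mem_Icc]
    exact ⟨⟨h1, h2⟩, h3, h4⟩
  obtain ⟨b, hb, hsup⟩ := Finset.exists_mem_eq_sup s ⟨q, hq⟩ id
  have hi0 : i0 w = b := hsup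
  simp only [hs, Finset.mem_filter, Finset.mem_Icc] at hb
  rw [hi0]
  exact ⟨hb.1.1, hb.1.2, hb.2.1, hb.2.2⟩

/-- Existence of a block start at or before any maximal position. -/
lemma exists_block_start {w : List ℕ} :
    ∀ q, 1 ≤ q → q ≤ w.length → get1 w q = maxVal w →
      ∃ p, 1 ≤ p ∧ p ≤ w.length ∧ get1 w p = maxVal w ∧
        (p = 1 ∨ get1 w (p-1) ≠ maxVal w) := by
  intro q
  induction q using Nat.strong_induction_on with
  | _ q ih =>
    intro h1 h2 h3
    by_cases h4 : q = 1 ∨ get1 w (q-1) ≠ maxVal w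
    · exact ⟨q, h1, h2, h3, h4⟩
    · push_neg at h4
      exact ih (q-1) (by omega) (by omega) (by omega) h4.2

/-! ### The three cases -/

/-- Case `c ∈ Maxb w`. -/
lemma case_maxb {w : List ℕ} {c : ℕ} (hc : c ∈ Maxb w) :
    get1 (ins w c) (c + 1) = maxVal (ins w c) ∧ i0 (ins w c) = c + 1 := by
  simp only [Maxb, Finset.mem_filter, Finset.mem_Icc] at hc
  obtain ⟨⟨hc1, hc2⟩, hcm⟩ := hc
  set m := maxVal w with hm
  have hc0 : c ≠ 0 := by omega
  have hnew : get1 (ins w c) (c + 1) = m + 1 := by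
    rw [get1_ins_self w c hc2, if_neg hc0, hcm]
  have hmax : maxVal (ins w c) = m + 1 := by
    refine le_antisymm (maxVal_le fun a ha => ?_) ?_
    · rcases mem_ins ha with ha | ha
      · exact le_trans (le_maxVal ha) (by omega)
      · rw [ha, if_neg hc0, hcm]
    · have := le_maxVal (newletter_mem_ins w c)
      rwa [if_neg hc0, hcm] at this
  refine ⟨by rw [hnew, hmax], ?_⟩
  have hlen := ins_length' w c hc2
  refine le_antisymm ?_ ?_
  · refine i0_le fun p h1 h2 h3 h4 => ?_
    by_contra hlt
    push_neg at hlt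
    have : get1 (ins w c) p = get1 w (p-1) := get1_ins_of_gt w c p hc2 (by omega)
    rw [hmax] at h3
    have := get1_le_maxVal w (p-1)
    omega
  · refine le_i0 (by omega) (by omega) (by rw [hnew, hmax]) (Or.inr ?_)
    have : get1 (ins w c) (c + 1 - 1) = get1 w c := by
      have : c + 1 - 1 = c := by omega
      rw [this]; exact get1_ins_of_le w c c hc2 hc1 le_rfl
    rw [this, hcm, hmax]; omega

/-- Case `c ∈ Maxa w`. -/
lemma case_maxa {w : List ℕ} {c : ℕ} (hc : c ∈ Maxa w) :
    get1 (ins w c) (c + 1) = maxVal (ins w c) ∧ i0 (ins w c) = c + 1 := by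
  simp only [Maxa, Finset.mem_filter, Finset.mem_Icc] at hc
  obtain ⟨⟨hc1, hc2⟩, hcm, hafter⟩ := hc
  set m := maxVal w with hm
  have hc0 : c ≠ 0 := by omega
  have hnew : get1 (ins w c) (c + 1) = m := by
    rw [get1_ins_self w c hc2, if_neg hc0, hcm]
  have hmax : maxVal (ins w c) = m := by
    refine le_antisymm (maxVal_le fun a ha => ?_) ?_
    · rcases mem_ins ha with ha | ha
      · exact le_maxVal ha
      · rw [ha, if_neg hc0, hcm]
    · have := le_maxVal (newletter_mem_ins w c)
      rwa [if_neg hc0, hcm] at this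
  refine ⟨by rw [hnew, hmax], ?_⟩
  have hlen := ins_length' w c hc2
  refine le_antisymm ?_ ?_
  · refine i0_le fun p h1 h2 h3 h4 => ?_
    by_contra hlt
    push_neg at hlt
    have hgp : get1 (ins w c) p = get1 w (p-1) := get1_ins_of_gt w c p hc2 (by omega)
    rw [hmax] at h3
    rcases Nat.lt_or_ge w.length (p-1) with h | h
    · have := get1_eq_zero_of_gt h
      omega
    · have := hafter (p-1) (by simp only [Finset.mem_Ioc]; omega)
      omega
  · refine le_i0 (by omega) (by omega) (by rw [hnew, hmax]) (Or.inr ?_)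
    have heq : get1 (ins w c) (c + 1 - 1) = get1 w c := by
      have : c + 1 - 1 = c := by omega
      rw [this]; exact get1_ins_of_le w c c hc2 hc1 le_rfl
    rw [heq, hmax]; omega

/-- Case `c = i0 w - 1` for a nonempty area sequence with `maxVal w = 0`:
all letters are zero and `i0 w = 1`. -/
lemma case_i0_zero {w : List ℕ} (hne : w ≠ []) (h0 : maxVal w = 0) :
    i0 w = 1 ∧ get1 (ins w 0) 1 = maxVal (ins w 0) ∧ i0 (ins w 0) = 1 := by
  have hlen : 1 ≤ w.length := List.length_pos_iff.2 hne
  have hall : ∀ j, get1 w j = 0 := fun j => by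
    have := get1_le_maxVal w j; omega
  have hi0 : i0 w = 1 := by
    refine le_antisymm (i0_le fun p h1 h2 h3 h4 => ?_) ?_
    · rcases h4 with h4 | h4
      · omega
      · exact absurd (by rw [hall, h0]) h4
    · exact le_i0 le_rfl hlen (by rw [hall, h0]) (Or.inl rfl)
  have hlen' := ins_length' w 0 (by omega)
  have hnew : get1 (ins w 0) 1 = 0 := by
    have := get1_ins_self w 0 (by omega)
    simpa using this
  have hmax : maxVal (ins w 0) = 0 := by
    refine le_antisymm (maxVal_le fun a ha => ?_) (Nat.zero_le _)
    rcases mem_ins ha with ha | ha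
    · exact le_trans (le_maxVal ha) (by omega)
    · simp at ha; omega
  refine ⟨hi0, by rw [hnew, hmax], ?_⟩
  refine le_antisymm (i0_le fun p h1 h2 h3 h4 => ?_) ?_
  · rcases h4 with h4 | h4
    · omega
    · have := get1_le_maxVal (ins w 0) (p-1)
      rw [hmax] at h4 this
      omega
  · exact le_i0 le_rfl (by omega) (by rw [hnew, hmax]) (Or.inl rfl)

/-- Case `c = i0 w - 1` for `maxVal w ≥ 1`. -/
lemma case_i0_pos {w : List ℕ} (hw : IsAreaSeq w) (hne : w ≠ []) (h1m : 1 ≤ maxVal w) :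
    get1 (ins w (i0 w - 1)) (i0 w - 1 + 1) = maxVal (ins w (i0 w - 1)) ∧
      i0 (ins w (i0 w - 1)) = i0 w - 1 + 1 := by
  set m := maxVal w with hm
  -- there is a maximal position, hence a block start
  obtain ⟨q, hq1, hq2, hq3⟩ := exists_get1_maxVal hne
  obtain ⟨r, hr1, hr2, hr3, hr4⟩ := exists_block_start q hq1 hq2 hq3
  obtain ⟨hp1, hp2, hp3, hp4⟩ := i0_spec hr1 hr2 hr3 hr4
  set p := i0 w with hp
  -- p ≥ 2 since w starts with 0 and m ≥ 1
  have hfirst : get1 w 1 = 0 := hw.1 hne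
  have hp2' : 2 ≤ p := by
    rcases Nat.lt_or_ge p 2 with h | h
    · exfalso
      have : p = 1 := by omega
      rw [this, hfirst] at hp3; omega
    · exact h
  have hpm1 : get1 w (p-1) ≠ m := by
    rcases hp4 with h | h
    · omega
    · exact h
  -- w_{p-1} = m - 1
  have harea : get1 w p ≤ get1 w (p-1) + 1 := by
    have := hw.2 (p-1) (by omega) (by omega)
    have hpp : p - 1 + 1 = p := by omega
    rwa [hpp] at this
  have hle := get1_le_maxVal w (p-1)
  have hprev : get1 w (p-1) + 1 = m := by omega
  set c := p - 1 with hcdef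
  have hc1 : 1 ≤ c := by omega
  have hc2 : c ≤ w.length := by omega
  have hc0 : c ≠ 0 := by omega
  have hcp : c + 1 = p := by omega
  have hnew : get1 (ins w c) (c + 1) = m := by
    rw [get1_ins_self w c hc2, if_neg hc0, hprev]
  have hmax : maxVal (ins w c) = m := by
    refine le_antisymm (maxVal_le fun a ha => ?_) ?_
    · rcases mem_ins ha with ha | ha
      · exact le_maxVal ha
      · rw [ha, if_neg hc0, hprev]
    · have := le_maxVal (newletter_mem_ins w c)
      rwa [if_neg hc0, hprev] at this
  have hlen := ins_length' w c hc2
  refine ⟨by rw [hnew, hmax], ?_⟩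
  refine le_antisymm ?_ ?_
  · refine i0_le fun j h1 h2 h3 h4 => ?_
    by_contra hlt
    push_neg at hlt
    -- j ≥ c + 2, so the letter at j comes from position j - 1 of w
    have hgj : get1 (ins w c) j = get1 w (j-1) := get1_ins_of_gt w c j hc2 (by omega)
    rw [hmax] at h3
    have h4' : get1 (ins w c) (j-1) ≠ m := by
      rcases h4 with h | h
      · omega
      · rwa [hmax] at h
    rcases Nat.lt_or_ge (c+1) (j-1) with hj | hj
    · -- j - 1 ≥ c + 2 : both letters come from w; j-1 is a block start in w beyond i0 w
      have hgj1 : get1 (ins w c) (j-1) = get1 w (j-2) := by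
        have := get1_ins_of_gt w c (j-1) hc2 (by omega)
        have hjj : j - 1 - 1 = j - 2 := by omega
        rwa [hjj] at this
      have hjlen : j - 1 ≤ w.length := by
        by_contra hh
        push_neg at hh
        have := get1_eq_zero_of_gt hh
        omega
      have : j - 1 ≤ i0 w := by
        refine le_i0 (by omega) hjlen (by omega) (Or.inr ?_)
        have : j - 1 - 1 = j - 2 := by omega
        rw [this]; omega
      omega
    · -- j - 1 = c + 1 : the previous letter is the inserted one, equal to m
      have : j - 1 = c + 1 := by omega
      rw [this, hnew] at h4'
      exact h4' rfl
  · refine le_i0 (by omega) (by omega) (by rw [hnew, hmax]) (Or.inr ?_)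
    have heq : get1 (ins w c) (c + 1 - 1) = get1 w c := by
      have : c + 1 - 1 = c := by omega
      rw [this]; exact get1_ins_of_le w c c hc2 hc1 le_rfl
    rw [heq, hmax]
    have : get1 w c = m - 1 := by omega
    omega

/-- Membership extraction for admissible positions. -/
lemma admissible_mem_cases {w : List ℕ} {c : ℕ} (hc : c ∈ admissible w) :
    (w = [] ∧ c = 0) ∨ c ∈ Maxb w ∨ c ∈ Maxa w ∨ (w ≠ [] ∧ c = i0 w - 1) := by
  unfold admissible at hc
  split at hc
  · rename_i h
    simp at hc
    exact Or.inl ⟨h, hc⟩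
  · simp only [List.mem_append, List.mem_reverse, Finset.mem_sort, List.mem_singleton] at hc
    rename_i h
    rcases hc with (hc | hc) | hc
    · exact Or.inr (Or.inl hc)
    · exact Or.inr (Or.inr (Or.inl hc))
    · exact Or.inr (Or.inr (Or.inr ⟨h, hc⟩))

lemma i0_le_length (w : List ℕ) : i0 w ≤ w.length + 1 := by
  refine i0_le fun p h1 h2 h3 h4 => by omega


/-- If `c_0, …, c_k` are the admissible insertion positions of an area sequence
`w` taken in admissible order, then the letter inserted at position `c_i + 1`
is of maximal value in `ins w c_i` and is the leftmost letter of the rightmost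
block of consecutive maximal letters, i.e. `i0 (ins w c_i) = c_i + 1`. -/
theorem ins_admissible_is_new_max (w : List ℕ) (hw : IsAreaSeq w)
    (i : ℕ) (hi : i < (admissible w).length) :
    get1 (ins w ((admissible w).getD i 0)) ((admissible w).getD i 0 + 1) =
        maxVal (ins w ((admissible w).getD i 0)) ∧
      i0 (ins w ((admissible w).getD i 0)) = (admissible w).getD i 0 + 1 := by
  set c := (admissible w).getD i 0 with hc
  have hmem : c ∈ admissible w := by
    rw [hc, List.getD_eq_getElem _ _ hi]
    exact List.getElem_mem _
  rcases admissible_mem_cases hmem with ⟨hw0, hc0⟩ | h | h | ⟨hne, hceq⟩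
  · subst hw0
    rw [hc0]
    decide
  · exact case_maxb h
  · exact case_maxa h
  · rcases Nat.eq_zero_or_pos (maxVal w) with h0 | h0
    · obtain ⟨hi0eq, h1, h2⟩ := case_i0_zero hne h0
      have hc0 : c = 0 := by omega
      rw [hc0]
      exact ⟨h1, h2⟩
    · rw [hceq]
      exact case_i0_pos hw hne h0
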